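/- Let X = {a, a, b} (as a multiset) with a = (1,0,0), b = (√2,1,0) ∈ H², and let p̃ = ((2+√2),1,0)/√(5+4√2). Then p̃ does not minimize φ_X(p) = Σ_{x∈X} d_H(p,x)² over p ∈ H²; in particular there exists q ∈ H² with φ_X(q) < φ_X(p̃). -/

import Mathlib

open Real

/-- arccosh(s) = log(s + √(s²−1)). -/
noncomputable def arccosh (s : ℝ) : ℝ := Real.log (s + Real.sqrt (s ^ 2 - 1))


/-- Minkowski bilinear form of signature (1, d) on ℝ^{d+1},
    with a point represented as a pair (x₀, (x₁, …, x_d)). -/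
noncomputable def minkB {d : ℕ} (x y : ℝ × (Fin d → ℝ)) : ℝ :=
  x.1 * y.1 - ∑ j, x.2 j * y.2 j

/-- The hyperboloid model H^d = {x : B(x,x) = 1, x₀ > 0}. -/
def Hyp (d : ℕ) : Set (ℝ × (Fin d → ℝ)) := {x | minkB x x = 1 ∧ 0 < x.1}

/-- Hyperbolic distance d_H(x,y) = arccosh(B(x,y)). -/
noncomputable def dHyp {d : ℕ} (x y : ℝ × (Fin d → ℝ)) : ℝ :=
  arccosh (minkB x y)

lemma arccosh_form {x : ℝ} (hx : 1 ≤ x) : arccosh ((x + x⁻¹)/2) = Real.log x := by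
  have hx0 : 0 < x := lt_of_lt_of_le one_pos hx
  have hc : x * x⁻¹ = 1 := mul_inv_cancel₀ (ne_of_gt hx0)
  have hinv : x⁻¹ ≤ x := by nlinarith
  have h1 : ((x + x⁻¹)/2)^2 - 1 = ((x - x⁻¹)/2)^2 := by nlinarith
  rw [arccosh, h1, Real.sqrt_sq (by nlinarith)]
  have h2 : (x + x⁻¹)/2 + (x - x⁻¹)/2 = x := by ring
  rw [h2]

set_option maxHeartbeats 1000000 in
theorem projected_average_not_frechet_mean :
    ∃ q ∈ Hyp 2,
      2 * dHyp q ((1, ![0, 0]) : ℝ × (Fin 2 → ℝ)) ^ 2 +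
          dHyp q ((Real.sqrt 2, ![1, 0]) : ℝ × (Fin 2 → ℝ)) ^ 2 <
        2 * dHyp ((Real.sqrt (5 + 4 * Real.sqrt 2))⁻¹ •
              ((2 + Real.sqrt 2, ![1, 0]) : ℝ × (Fin 2 → ℝ)))
            ((1, ![0, 0]) : ℝ × (Fin 2 → ℝ)) ^ 2 +
          dHyp ((Real.sqrt (5 + 4 * Real.sqrt 2))⁻¹ •
              ((2 + Real.sqrt 2, ![1, 0]) : ℝ × (Fin 2 → ℝ)))
            ((Real.sqrt 2, ![1, 0]) : ℝ × (Fin 2 → ℝ)) ^ 2 := by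
  have sq2 : Real.sqrt 2 * Real.sqrt 2 = 2 := Real.mul_self_sqrt (by norm_num)
  have sq2' : Real.sqrt 2 ^ 2 = 2 := Real.sq_sqrt (by norm_num)
  have h2pos : (1:ℝ) ≤ Real.sqrt 2 := by nlinarith [Real.sqrt_nonneg 2]
  set r : ℝ := (1 + Real.sqrt 2) ^ ((1:ℝ)/3) with hr_def
  have hbpos : (0:ℝ) < 1 + Real.sqrt 2 := by linarith
  have hrpos : 0 < r := Real.rpow_pos_of_pos hbpos _
  have hr3 : r ^ (3:ℕ) = 1 + Real.sqrt 2 := by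
    rw [hr_def, ← Real.rpow_natCast ((1 + Real.sqrt 2) ^ ((1:ℝ)/3)) 3,
      ← Real.rpow_mul (le_of_lt hbpos)]
    norm_num
  have hr1 : (1:ℝ) ≤ r := by nlinarith [hr3, h2pos, mul_pos hrpos hrpos, hrpos]
  have hrlog : Real.log r = (1/3) * Real.log (1 + Real.sqrt 2) := by
    rw [hr_def, Real.log_rpow hbpos]
  set S : ℝ := Real.sqrt (5 + 4 * Real.sqrt 2) with hS_def
  have hSbase : (0:ℝ) < 5 + 4 * Real.sqrt 2 := by nlinarith
  have hSpos : 0 < S := Real.sqrt_pos.mpr hSbase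
  have hS2 : S ^ 2 = 5 + 4 * Real.sqrt 2 := Real.sq_sqrt (le_of_lt hSbase)
  have hSne : S ≠ 0 := ne_of_gt hSpos
  have h32 : (0:ℝ) < 3 + Real.sqrt 2 := by linarith
  have h322 : (0:ℝ) < 3 + 2 * Real.sqrt 2 := by linarith
  set L : ℝ := Real.log (1 + Real.sqrt 2) with hL_def
  set N : ℝ := Real.log (3 + Real.sqrt 2) with hN_def
  have hlogS : Real.log S = (L + N) / 2 := by
    rw [hS_def, Real.log_sqrt (le_of_lt hSbase)]
    have h : (5 : ℝ) + 4 * Real.sqrt 2 = (1 + Real.sqrt 2) * (3 + Real.sqrt 2) := by nlinarith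
    rw [h, Real.log_mul (ne_of_gt hbpos) (ne_of_gt h32)]
  have hrinv : r * r⁻¹ = 1 := mul_inv_cancel₀ (ne_of_gt hrpos)
  have hi3 : r⁻¹ ^ (3:ℕ) = Real.sqrt 2 - 1 := by
    have h : r⁻¹ ^ (3:ℕ) * (1 + Real.sqrt 2) = 1 := by
      rw [← hr3, inv_pow]
      field_simp
    nlinarith [h, sq2, hbpos]
  refine ⟨((r + r⁻¹)/2, ![(r - r⁻¹)/2, 0]), ⟨?_, ?_⟩, ?_⟩
  · show minkB _ _ = 1
    simp only [minkB, Fin.sum_univ_two, Matrix.cons_val_zero, Matrix.cons_val_one,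
      Matrix.head_cons]
    nlinarith [hrinv]
  · show (0:ℝ) < (r + r⁻¹)/2
    have : 0 < r⁻¹ := inv_pos.mpr hrpos
    positivity
  have dqa : dHyp ((r + r⁻¹)/2, ![(r - r⁻¹)/2, 0]) ((1, ![0, 0]) : ℝ × (Fin 2 → ℝ)) = (1/3) * L := by
    have hB : minkB ((r + r⁻¹)/2, ![(r - r⁻¹)/2, 0]) ((1, ![0, 0]) : ℝ × (Fin 2 → ℝ)) = (r + r⁻¹)/2 := by
      simp [minkB, Fin.sum_univ_two]
    rw [dHyp, hB, arccosh_form hr1, hrlog]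
  have dqb : dHyp ((r + r⁻¹)/2, ![(r - r⁻¹)/2, 0]) ((Real.sqrt 2, ![1, 0]) : ℝ × (Fin 2 → ℝ)) = (2/3) * L := by
    have hB : minkB ((r + r⁻¹)/2, ![(r - r⁻¹)/2, 0]) ((Real.sqrt 2, ![1, 0]) : ℝ × (Fin 2 → ℝ))
        = (r^2 + (r^2)⁻¹)/2 := by
      simp only [minkB, Fin.sum_univ_two, Matrix.cons_val_zero, Matrix.cons_val_one,
        Matrix.head_cons]
      rw [← inv_pow]
      linear_combination (-(r⁻¹) * hr3 - r * hi3 + (r^2 + r⁻¹^2) * hrinv) / 2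
    have hr21 : (1:ℝ) ≤ r ^ 2 := by nlinarith
    rw [dHyp, hB, arccosh_form hr21, Real.log_pow, hrlog]
    push_cast
    ring
  have hSle1 : S ≤ 3 + Real.sqrt 2 := by nlinarith [hS2, sq2', hSpos, h32]
  have hSle2 : S ≤ 3 + 2 * Real.sqrt 2 := by nlinarith [hS2, sq2', hSpos, h322]
  have hx1 : (1:ℝ) ≤ (3 + Real.sqrt 2)/S := (one_le_div hSpos).mpr hSle1
  have hx2 : (1:ℝ) ≤ (3 + 2 * Real.sqrt 2)/S := (one_le_div hSpos).mpr hSle2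
  have dpa : dHyp ((S⁻¹ • ((2 + Real.sqrt 2, ![1, 0]) : ℝ × (Fin 2 → ℝ))))
      ((1, ![0, 0]) : ℝ × (Fin 2 → ℝ)) = (N - L)/2 := by
    have hB : minkB (S⁻¹ • ((2 + Real.sqrt 2, ![1, 0]) : ℝ × (Fin 2 → ℝ)))
        ((1, ![0, 0]) : ℝ × (Fin 2 → ℝ)) = ((3 + Real.sqrt 2)/S + ((3 + Real.sqrt 2)/S)⁻¹)/2 := by
      simp only [minkB, Fin.sum_univ_two, Prod.smul_fst, Prod.smul_snd, Pi.smul_apply,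
        smul_eq_mul, Matrix.cons_val_zero, Matrix.cons_val_one, Matrix.head_cons]
      rw [inv_div]
      field_simp
      nlinarith [hS2, sq2', sq2]
    rw [dHyp, hB, arccosh_form hx1, Real.log_div (ne_of_gt h32) hSne, ← hN_def, hlogS]
    ring
  have dpb : dHyp ((S⁻¹ • ((2 + Real.sqrt 2, ![1, 0]) : ℝ × (Fin 2 → ℝ))))
      ((Real.sqrt 2, ![1, 0]) : ℝ × (Fin 2 → ℝ)) = (3*L - N)/2 := by
    have hB : minkB (S⁻¹ • ((2 + Real.sqrt 2, ![1, 0]) : ℝ × (Fin 2 → ℝ)))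
        ((Real.sqrt 2, ![1, 0]) : ℝ × (Fin 2 → ℝ))
        = ((3 + 2 * Real.sqrt 2)/S + ((3 + 2 * Real.sqrt 2)/S)⁻¹)/2 := by
      simp only [minkB, Fin.sum_univ_two, Prod.smul_fst, Prod.smul_snd, Pi.smul_apply,
        smul_eq_mul, Matrix.cons_val_zero, Matrix.cons_val_one, Matrix.head_cons]
      rw [inv_div]
      field_simp
      linear_combination (10 + 4*Real.sqrt 2) * sq2' - hS2
    have hpow : (3 + 2 * Real.sqrt 2 : ℝ) = (1 + Real.sqrt 2)^(2:ℕ) := by nlinarith [sq2]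
    rw [dHyp, hB, arccosh_form hx2, Real.log_div (ne_of_gt h322) hSne, hpow,
      Real.log_pow, hlogS, ← hL_def]
    push_cast
    ring
  rw [dqa, dqb, dpa, dpb]
  have h41 : (0:ℝ) < 41 + 29 * Real.sqrt 2 := by nlinarith
  have hkey : 5 * L < 3 * N := by
    have e1 : ((1 + Real.sqrt 2)^(5:ℕ) : ℝ) = 41 + 29 * Real.sqrt 2 := by
      linear_combination (Real.sqrt 2^3 + 5*Real.sqrt 2^2 + 12*Real.sqrt 2 + 20) * sq2'
    have e2 : ((3 + Real.sqrt 2)^(3:ℕ) : ℝ) = 45 + 29 * Real.sqrt 2 := by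
      linear_combination (Real.sqrt 2 + 9) * sq2'
    have h := Real.log_lt_log h41 (by linarith : (41:ℝ) + 29 * Real.sqrt 2 < 45 + 29 * Real.sqrt 2)
    rw [← e1, ← e2, Real.log_pow, Real.log_pow, ← hL_def, ← hN_def] at h
    push_cast at h
    linarith
  nlinarith [mul_pos (by linarith : (0:ℝ) < 3*N - 5*L) (by linarith : (0:ℝ) < 3*N - 5*L)]
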